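/- As λ → +∞ the Beta skew-normal density tends pointwise to the Beta half-normal density: for every x > 0, lim_{λ→∞} g(x; λ, a, b) = (2^b / B(a,b)) (2Φ(x) − 1)^{a−1} (1 − Φ(x))^{b−1} φ(x), and for every x < 0, lim_{λ→∞} g(x; λ, a, b) = 0. -/

import Mathlib

open MeasureTheory

/-- Standard normal density. -/
noncomputable def normPdf (x : ℝ) : ℝ := Real.exp (-x ^ 2 / 2) / Real.sqrt (2 * Real.pi)

/-- Standard normal cdf. -/
noncomputable def normCdf (x : ℝ) : ℝ := ∫ t in Set.Iic x, normPdf t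

/-- Skew-normal cdf with parameter `l`. -/
noncomputable def snCdf (l z : ℝ) : ℝ := ∫ t in Set.Iic z, 2 * normPdf t * normCdf (l * t)

/-- The Beta function. -/
noncomputable def betaFn (a b : ℝ) : ℝ := Real.Gamma a * Real.Gamma b / Real.Gamma (a + b)

/-- The Beta skew-normal density with parameters `l`, `a`, `b`. -/
noncomputable def bsnPdf (l a b x : ℝ) : ℝ :=
  (2 / betaFn a b) * snCdf l x ^ (a - 1) * (1 - snCdf l x) ^ (b - 1) * normPdf x *
    normCdf (l * x)


open MeasureTheory Set Filter Real

lemma sqrt2pi_pos : 0 < Real.sqrt (2 * Real.pi) := Real.sqrt_pos.2 (by positivity)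

lemma normPdf_pos (x : ℝ) : 0 < normPdf x := div_pos (Real.exp_pos _) sqrt2pi_pos

lemma normPdf_nonneg (x : ℝ) : 0 ≤ normPdf x := (normPdf_pos x).le

lemma normPdf_cont : Continuous normPdf := by
  unfold normPdf
  exact (Real.continuous_exp.comp (by continuity)).div_const _

lemma normPdf_integrable : Integrable normPdf := by
  have h : Integrable (fun x : ℝ => Real.exp (-(1/2) * x ^ 2)) := integrable_exp_neg_mul_sq (by norm_num)
  have := h.div_const (Real.sqrt (2 * Real.pi))
  refine this.congr (ae_of_all _ fun x => ?_)
  unfold normPdf; ring_nf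

lemma normPdf_integral : ∫ x, normPdf x = 1 := by
  have h := integral_gaussian (1/2)
  have h2 : ∫ x : ℝ, Real.exp (-x ^ 2 / 2) = Real.sqrt (2 * Real.pi) := by
    rw [show Real.sqrt (2 * Real.pi) = Real.sqrt (Real.pi / (1/2)) by norm_num [mul_comm]]
    rw [← h]; congr 1; ext x; ring_nf
  unfold normPdf
  rw [integral_div, h2, div_self sqrt2pi_pos.ne']

lemma normCdf_nonneg (x : ℝ) : 0 ≤ normCdf x :=
  setIntegral_nonneg measurableSet_Iic fun t _ => normPdf_nonneg t

lemma normCdf_mono : Monotone normCdf := fun u v huv =>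
  setIntegral_mono_set normPdf_integrable.integrableOn
    (ae_of_all _ fun t => normPdf_nonneg t) (HasSubset.Subset.eventuallyLE (Iic_subset_Iic.2 huv))

lemma normCdf_le_one (x : ℝ) : normCdf x ≤ 1 := by
  have h := setIntegral_mono_set (s := Iic x) (t := univ) normPdf_integrable.integrableOn
    (ae_of_all _ fun t => normPdf_nonneg t) (HasSubset.Subset.eventuallyLE (subset_univ _))
  rwa [setIntegral_univ, normPdf_integral] at h

lemma normCdf_add {u v : ℝ} (h : u ≤ v) :
    normCdf v = normCdf u + ∫ t in Ioc u v, normPdf t := by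
  rw [normCdf, normCdf, ← Set.Iic_union_Ioc_eq_Iic h,
    setIntegral_union (Set.Iic_disjoint_Ioc le_rfl) measurableSet_Ioc
      normPdf_integrable.integrableOn normPdf_integrable.integrableOn]

lemma normCdf_strict {u v : ℝ} (h : u < v) : normCdf u < normCdf v := by
  rw [normCdf_add h.le]
  have hpos : 0 < ∫ t in Ioc u v, normPdf t := by
    rw [setIntegral_pos_iff_support_of_nonneg_ae
      (ae_of_all _ fun t => normPdf_nonneg t) normPdf_integrable.integrableOn]
    have : (Function.support normPdf) = univ := by
      ext t; simp [Function.support, (normPdf_pos t).ne']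
    rw [this, Set.univ_inter, Real.volume_Ioc]
    simpa using sub_pos.2 h
  linarith

lemma normCdf_neg (y : ℝ) : normCdf (-y) = 1 - normCdf y := by
  have h1 : normCdf (-y) = ∫ t in Iic (-y), normPdf (-t) := by
    refine setIntegral_congr_fun measurableSet_Iic fun t _ => ?_
    unfold normPdf; rw [neg_pow]; ring_nf
  rw [h1, integral_comp_neg_Iic, neg_neg]
  have h2 : (1:ℝ) = normCdf y + ∫ t in Ioi y, normPdf t := by
    rw [← normPdf_integral, normCdf, ← setIntegral_union (Set.Iic_disjoint_Ioi le_rfl)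
      measurableSet_Ioi normPdf_integrable.integrableOn normPdf_integrable.integrableOn,
      Set.Iic_union_Ioi, setIntegral_univ]
  linarith

lemma normCdf_zero : normCdf 0 = 1/2 := by
  have := normCdf_neg 0
  rw [neg_zero] at this; linarith

lemma normPdf_shift_integral (y : ℝ) : ∫ t in Iic y, normPdf (t - y) = normCdf 0 := by
  have h : ∀ t : ℝ, (Iic y).indicator (fun t => normPdf (t - y)) t
      = (Iic 0).indicator normPdf (t - y) := by
    intro t
    simp only [Set.indicator_apply, Set.mem_Iic, sub_nonpos]
  rw [← integral_indicator measurableSet_Iic]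
  simp_rw [h]
  rw [integral_sub_right_eq_self ((Iic (0:ℝ)).indicator normPdf) y,
    integral_indicator measurableSet_Iic]
  rfl

lemma normCdf_chernoff {y : ℝ} (hy : y ≤ 0) : normCdf y ≤ Real.exp (-y^2/2) / 2 := by
  have key : ∀ t ∈ Iic y, normPdf t ≤ Real.exp (-y^2/2) * normPdf (t - y) := by
    intro t ht
    rw [Set.mem_Iic] at ht
    unfold normPdf
    rw [← mul_div_assoc, ← Real.exp_add]
    gcongr
    nlinarith [mul_nonneg (neg_nonneg.mpr hy) (neg_nonneg.mpr (sub_nonpos.mpr ht))]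
  have hint : IntegrableOn (fun t => Real.exp (-y^2/2) * normPdf (t - y)) (Iic y) := by
    exact (((normPdf_integrable.comp_sub_right y)).const_mul _).integrableOn
  calc normCdf y ≤ ∫ t in Iic y, Real.exp (-y^2/2) * normPdf (t - y) :=
        setIntegral_mono_on normPdf_integrable.integrableOn hint measurableSet_Iic key
    _ = Real.exp (-y^2/2) * ∫ t in Iic y, normPdf (t - y) := by rw [integral_const_mul]
    _ = Real.exp (-y^2/2) * (1/2) := by rw [normPdf_shift_integral, normCdf_zero]
    _ = Real.exp (-y^2/2) / 2 := by ring

lemma normCdf_lower {y : ℝ} (hy : y ≤ 0) : normPdf (y - 1) ≤ normCdf y := by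
  have h1 : normPdf (y - 1) = ∫ _t in Ioc (y-1) y, normPdf (y - 1) := by
    rw [setIntegral_const, Real.volume_real_Ioc_of_le (by linarith), smul_eq_mul]
    ring
  have h2 : (∫ _t in Ioc (y-1) y, normPdf (y - 1)) ≤ ∫ t in Ioc (y-1) y, normPdf t := by
    refine setIntegral_mono_on ?_ normPdf_integrable.integrableOn measurableSet_Ioc ?_
    · exact integrableOn_const (by rw [Real.volume_Ioc]; exact ENNReal.ofReal_ne_top)
    · intro t ht
      unfold normPdf
      have h3 : t ≤ 1 - y := by rcases ht with ⟨h4, h5⟩; linarith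
      have h4 := sq_le_sq' (by linarith [ht.1.le] : -(1-y) ≤ t) h3
      have h5 : Real.exp (-(y-1)^2/2) ≤ Real.exp (-t^2/2) := by
        apply Real.exp_le_exp.2; nlinarith
      exact div_le_div_of_nonneg_right h5 sqrt2pi_pos.le
  have h3 : (∫ t in Ioc (y-1) y, normPdf t) ≤ normCdf y :=
    setIntegral_mono_set normPdf_integrable.integrableOn (ae_of_all _ fun t => normPdf_nonneg t)
      (HasSubset.Subset.eventuallyLE Ioc_subset_Iic_self)
  linarith

lemma exp_tendsto {c : ℝ} (hc : c ≠ 0) :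
    Tendsto (fun l : ℝ => Real.exp (-(l*c)^2/2)) atTop (nhds 0) := by
  apply Real.tendsto_exp_atBot.comp
  have h1 : Tendsto (fun l : ℝ => c^2 * l^2) atTop atTop :=
    Tendsto.const_mul_atTop (by positivity) (tendsto_pow_atTop (by norm_num))
  have h2 := Tendsto.const_mul_atTop_of_neg (show (-(1/2) : ℝ) < 0 by norm_num) h1
  exact h2.congr fun l => by ring

lemma normCdf_tendsto_zero {x : ℝ} (hx : x < 0) :
    Tendsto (fun l : ℝ => normCdf (l * x)) atTop (nhds 0) := by
  apply squeeze_zero' (Eventually.of_forall fun l => normCdf_nonneg _)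
    ((eventually_ge_atTop (0:ℝ)).mono fun l hl => normCdf_chernoff (by nlinarith))
  have := (exp_tendsto (show x ≠ 0 from hx.ne)).div_const 2
  simpa using this

lemma normCdf_tendsto_one {x : ℝ} (hx : 0 < x) :
    Tendsto (fun l : ℝ => normCdf (l * x)) atTop (nhds 1) := by
  have h1 : Tendsto (fun l : ℝ => 1 - normCdf (l * (-x))) atTop (nhds (1 - 0)) :=
    tendsto_const_nhds.sub (normCdf_tendsto_zero (by linarith))
  have h2 : ∀ l : ℝ, 1 - normCdf (l * (-x)) = normCdf (l * x) := by
    intro l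
    have := normCdf_neg (l * x)
    rw [show l * -x = -(l*x) by ring]
    linarith
  simpa [h2] using h1.congr fun l => h2 l

lemma snIntegrand_meas (l : ℝ) : Measurable (fun t => 2 * normPdf t * normCdf (l * t)) :=
  ((normPdf_cont.measurable.const_mul 2).mul
    (normCdf_mono.measurable.comp (measurable_id.const_mul l)))

lemma snIntegrand_nonneg (l t : ℝ) : 0 ≤ 2 * normPdf t * normCdf (l * t) :=
  mul_nonneg (mul_nonneg zero_le_two (normPdf_nonneg t)) (normCdf_nonneg _)

lemma snIntegrand_le (l t : ℝ) : 2 * normPdf t * normCdf (l * t) ≤ 2 * normPdf t :=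
  mul_le_of_le_one_right (mul_nonneg zero_le_two (normPdf_nonneg t)) (normCdf_le_one _)

lemma snIntegrand_int (l : ℝ) {s : Set ℝ} : IntegrableOn (fun t => 2 * normPdf t * normCdf (l * t)) s := by
  refine Integrable.integrableOn (Integrable.mono' (normPdf_integrable.const_mul 2)
    (snIntegrand_meas l).aestronglyMeasurable (ae_of_all _ fun t => ?_))
  rw [Real.norm_eq_abs, abs_of_nonneg (snIntegrand_nonneg l t)]
  exact snIntegrand_le l t

lemma snCdf_nonneg (l x : ℝ) : 0 ≤ snCdf l x :=
  setIntegral_nonneg measurableSet_Iic fun t _ => snIntegrand_nonneg l t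

lemma snCdf_le (l x : ℝ) : snCdf l x ≤ 2 * normCdf x := by
  calc snCdf l x ≤ ∫ t in Iic x, 2 * normPdf t :=
        setIntegral_mono_on (snIntegrand_int l) ((normPdf_integrable.const_mul 2).integrableOn)
          measurableSet_Iic fun t _ => snIntegrand_le l t
    _ = 2 * normCdf x := by rw [integral_const_mul]; rfl

lemma snCdf_tendsto_neg {x : ℝ} (hx : x < 0) :
    Tendsto (fun l : ℝ => snCdf l x) atTop (nhds 0) := by
  have h0 : (0:ℝ) = ∫ _t in Iic x, (0:ℝ) := by simp
  rw [h0]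
  apply tendsto_integral_filter_of_dominated_convergence (fun t => 2 * normPdf t)
  · exact Eventually.of_forall fun l => (snIntegrand_meas l).aestronglyMeasurable
  · refine Eventually.of_forall fun l => ae_of_all _ fun t => ?_
    rw [Real.norm_eq_abs, abs_of_nonneg (snIntegrand_nonneg l t)]
    exact snIntegrand_le l t
  · exact (normPdf_integrable.const_mul 2).integrableOn
  · refine (ae_restrict_iff' measurableSet_Iic).2 (ae_of_all _ fun t ht => ?_)
    have ht0 : t < 0 := lt_of_le_of_lt ht hx
    have := (tendsto_const_nhds (x := 2 * normPdf t) (f := atTop (α := ℝ))).mul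
      (normCdf_tendsto_zero ht0)
    simpa using this

lemma snCdf_tendsto_pos {x : ℝ} (hx : 0 < x) :
    Tendsto (fun l : ℝ => snCdf l x) atTop (nhds (2 * normCdf x - 1)) := by
  have hG : (2 * normCdf x - 1) = ∫ t in Iic x, (Ioi (0:ℝ)).indicator (fun t => 2 * normPdf t) t := by
    rw [integral_indicator measurableSet_Ioi, Measure.restrict_restrict measurableSet_Ioi,
      Set.Ioi_inter_Iic, integral_const_mul]
    have := normCdf_add hx.le
    rw [normCdf_zero] at this
    have h2 : (∫ t in Ioc 0 x, normPdf t) = normCdf x - 1/2 := by linarith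
    rw [h2]; ring
  rw [hG]
  apply tendsto_integral_filter_of_dominated_convergence (fun t => 2 * normPdf t)
  · exact Eventually.of_forall fun l => (snIntegrand_meas l).aestronglyMeasurable
  · refine Eventually.of_forall fun l => ae_of_all _ fun t => ?_
    rw [Real.norm_eq_abs, abs_of_nonneg (snIntegrand_nonneg l t)]
    exact snIntegrand_le l t
  · exact (normPdf_integrable.const_mul 2).integrableOn
  · have h0 : ∀ᵐ t : ℝ, t ≠ 0 := by
      refine ae_iff.2 ?_
      have : {t : ℝ | ¬ t ≠ 0} = {0} := by ext t; simp
      rw [this]; exact Real.volume_singleton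
    refine ae_restrict_of_ae (h0.mono fun t ht => ?_)
    rcases ht.lt_or_gt with ht0 | ht0
    · have := (tendsto_const_nhds (x := 2 * normPdf t) (f := atTop (α := ℝ))).mul
        (normCdf_tendsto_zero ht0)
      simpa [Set.indicator_of_notMem (by simpa using ht0.not_gt : t ∉ Ioi (0:ℝ))] using this
    · have := (tendsto_const_nhds (x := 2 * normPdf t) (f := atTop (α := ℝ))).mul
        (normCdf_tendsto_one ht0)
      simpa [Set.indicator_of_mem (by simpa using ht0 : t ∈ Ioi (0:ℝ))] using this

lemma quad_atBot {p q r : ℝ} (hp : p < 0) :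
    Tendsto (fun l : ℝ => p*l^2 + q*l + r) atTop atBot := by
  have h1 : Tendsto (fun l : ℝ => p*l + q) atTop atBot :=
    tendsto_atBot_add_const_right _ q (Tendsto.const_mul_atTop_of_neg hp tendsto_id)
  have h2 : Tendsto (fun l : ℝ => l*(p*l+q)) atTop atBot := tendsto_id.atTop_mul_atBot₀ h1
  have h3 := tendsto_atBot_add_const_right _ r h2
  exact h3.congr fun l => by ring

lemma snCdf_lb {x u l : ℝ} (hux : u < x) (hx : x < 0) (hl : 0 ≤ l) :
    (x - u) * (2 * normPdf u * normPdf (l*u - 1)) ≤ snCdf l x := by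
  have hu0 : u < 0 := hux.trans hx
  have hlu : l * u ≤ 0 := mul_nonpos_iff.2 (Or.inl ⟨hl, hu0.le⟩)
  have h1 : (x-u) * (2*normPdf u * normPdf (l*u-1)) ≤ (x-u) * (2*normPdf u * normCdf (l*u)) := by
    have h := normCdf_lower hlu
    have hxu : (0:ℝ) ≤ x - u := by linarith
    have h2 : (0:ℝ) ≤ 2 * normPdf u := mul_nonneg zero_le_two (normPdf_nonneg u)
    nlinarith [mul_le_mul_of_nonneg_left h h2]
  have h2 : (x-u) * (2*normPdf u * normCdf (l*u)) = ∫ _t in Ioc u x, 2*normPdf u * normCdf (l*u) := by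
    rw [setIntegral_const, Real.volume_real_Ioc_of_le (by linarith), smul_eq_mul]
  have h3 : (∫ _t in Ioc u x, 2*normPdf u * normCdf (l*u))
      ≤ ∫ t in Ioc u x, 2*normPdf t * normCdf (l*t) := by
    refine setIntegral_mono_on ?_ ((snIntegrand_int l)) measurableSet_Ioc ?_
    · exact integrableOn_const (by rw [Real.volume_Ioc]; exact ENNReal.ofReal_ne_top)
    · intro t ht
      have htu : u < t := ht.1
      have htx : t ≤ x := ht.2
      have hphi : normPdf u ≤ normPdf t := by
        unfold normPdf
        have h4 := sq_le_sq' (by linarith : -(-u) ≤ t) (by linarith : t ≤ -u)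
        have h5 : Real.exp (-u^2/2) ≤ Real.exp (-t^2/2) := by
          apply Real.exp_le_exp.2; nlinarith
        exact div_le_div_of_nonneg_right h5 sqrt2pi_pos.le
      have hcdf : normCdf (l*u) ≤ normCdf (l*t) :=
        normCdf_mono (mul_le_mul_of_nonneg_left htu.le hl)
      have := mul_le_mul (by linarith : 2 * normPdf u ≤ 2 * normPdf t) hcdf
        (normCdf_nonneg _) (mul_nonneg zero_le_two (normPdf_nonneg t))
      exact this
  have h4 : (∫ t in Ioc u x, 2*normPdf t * normCdf (l*t)) ≤ snCdf l x :=
    setIntegral_mono_set (snIntegrand_int l) (ae_of_all _ fun t => snIntegrand_nonneg l t)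
      (HasSubset.Subset.eventuallyLE Ioc_subset_Iic_self)
  linarith

lemma betaFn_pos {a b : ℝ} (ha : 0 < a) (hb : 0 < b) : 0 < betaFn a b :=
  div_pos (mul_pos (Real.Gamma_pos_of_pos ha) (Real.Gamma_pos_of_pos hb))
    (Real.Gamma_pos_of_pos (by linarith))


/-- As `l → +∞` the Beta skew-normal density tends pointwise to the Beta
half-normal density for `x > 0`, and to `0` for `x < 0`. -/
theorem bsn_tendsto_bhn (a b : ℝ) (ha : 0 < a) (hb : 0 < b) :
    (∀ x : ℝ, 0 < x →
      Filter.Tendsto (fun l : ℝ => bsnPdf l a b x) Filter.atTop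
        (nhds ((2 ^ b / betaFn a b) * (2 * normCdf x - 1) ^ (a - 1) *
          (1 - normCdf x) ^ (b - 1) * normPdf x))) ∧
    (∀ x : ℝ, x < 0 →
      Filter.Tendsto (fun l : ℝ => bsnPdf l a b x) Filter.atTop (nhds 0)) := by

  have hB := betaFn_pos ha hb
  constructor
  · intro x hx
    have hS : 0 < 2 * normCdf x - 1 := by
      have := normCdf_strict hx
      rw [normCdf_zero] at this; linarith
    have hΦ1 : normCdf x < 1 := by
      have h1 := normCdf_lower (y := -x) (by linarith)
      have h2 := normCdf_neg x
      have h3 := normPdf_pos (-x - 1)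
      linarith
    have h1S : 0 < 1 - (2 * normCdf x - 1) := by linarith
    have t1 : Tendsto (fun l : ℝ => snCdf l x ^ (a-1)) atTop
        (nhds ((2 * normCdf x - 1) ^ (a-1))) :=
      ((Real.continuousAt_rpow_const _ _ (Or.inl hS.ne')).tendsto).comp (snCdf_tendsto_pos hx)
    have t2 : Tendsto (fun l : ℝ => (1 - snCdf l x) ^ (b-1)) atTop
        (nhds ((1 - (2 * normCdf x - 1)) ^ (b-1))) :=
      ((Real.continuousAt_rpow_const _ _ (Or.inl h1S.ne')).tendsto).comp
        (tendsto_const_nhds.sub (snCdf_tendsto_pos hx))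
    have t3 : Tendsto (fun l : ℝ => bsnPdf l a b x) atTop
        (nhds ((2 / betaFn a b) * (2 * normCdf x - 1) ^ (a-1) *
          (1 - (2 * normCdf x - 1)) ^ (b-1) * normPdf x * 1)) := by
      simp only [bsnPdf]
      exact ((((tendsto_const_nhds.mul t1).mul t2).mul tendsto_const_nhds).mul
        (normCdf_tendsto_one hx))
    convert t3 using 1
    have e1 : (1 - (2 * normCdf x - 1)) = 2 * (1 - normCdf x) := by ring
    have e2 : ((2:ℝ) * (1 - normCdf x)) ^ (b-1) = 2 ^ (b-1) * (1 - normCdf x) ^ (b-1) :=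
      Real.mul_rpow zero_le_two (by linarith)
    have e3 : (2:ℝ) ^ b = 2 ^ (1:ℝ) * 2 ^ (b-1) := by
      rw [← Real.rpow_add two_pos]; norm_num
    rw [e1, e2, e3, Real.rpow_one]
    ring
  · intro x hx
    have h2Φ : 2 * normCdf x < 1 := by
      have := normCdf_strict hx
      rw [normCdf_zero] at this; linarith
    set M : ℝ := max 1 ((1 - 2 * normCdf x) ^ (b-1)) with hM
    have hM0 : (0:ℝ) ≤ M := le_trans zero_le_one (le_max_left _ _)
    have hsle : ∀ l : ℝ, snCdf l x ≤ 2 * normCdf x := fun l => snCdf_le l x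
    have hMb : ∀ l : ℝ, (1 - snCdf l x) ^ (b-1) ≤ M := by
      intro l
      rcases le_total 1 b with hb1 | hb1
      · refine le_trans (Real.rpow_le_one ?_ ?_ (by linarith)) (le_max_left _ _)
        · have := hsle l; linarith
        · have := snCdf_nonneg l x; linarith
      · refine le_trans ?_ (le_max_right _ _)
        exact Real.rpow_le_rpow_of_nonpos (by linarith) (by have := hsle l; linarith)
          (by linarith)
    have hnn : ∀ l : ℝ, 0 ≤ bsnPdf l a b x := by
      intro l
      unfold bsnPdf
      have hs0 := snCdf_nonneg l x
      have h1s : (0:ℝ) ≤ 1 - snCdf l x := by have := hsle l; linarith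
      exact mul_nonneg (mul_nonneg (mul_nonneg (mul_nonneg
        (le_of_lt (div_pos two_pos hB)) (Real.rpow_nonneg hs0 _))
        (Real.rpow_nonneg h1s _)) (normPdf_nonneg x)) (normCdf_nonneg _)
    rcases le_or_gt 1 a with ha1 | ha1
    · -- a ≥ 1 : easy squeeze
      apply squeeze_zero' (Eventually.of_forall hnn)
        (Eventually.of_forall (fun l => ?_))
        (g := fun l => (2 / betaFn a b * M * normPdf x) * normCdf (l * x))
      · have := (normCdf_tendsto_zero hx).const_mul (2 / betaFn a b * M * normPdf x)
        simpa using this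
      · -- bound
        have hs0 := snCdf_nonneg l x
        have e1 : snCdf l x ^ (a-1) ≤ 1 :=
          Real.rpow_le_one hs0 (by have := hsle l; linarith) (by linarith)
        have e2 := hMb l
        unfold bsnPdf
        have hC : (0:ℝ) ≤ 2 / betaFn a b := le_of_lt (div_pos two_pos hB)
        calc (2 / betaFn a b) * snCdf l x ^ (a - 1) * (1 - snCdf l x) ^ (b - 1) * normPdf x *
              normCdf (l * x)
            ≤ (2 / betaFn a b) * 1 * M * normPdf x * normCdf (l * x) := by
              gcongr
              · exact normCdf_nonneg _
              · exact normPdf_nonneg x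
              · exact Real.rpow_nonneg (by have := hsle l; linarith) _
          _ = (2 / betaFn a b * M * normPdf x) * normCdf (l * x) := by ring
    · -- 0 < a < 1 : delicate squeeze
      obtain ⟨c, hc2, hc1⟩ : ∃ c : ℝ, c^2 = 1 + a/2 ∧ 1 < c := by
        refine ⟨Real.sqrt (1 + a/2), Real.sq_sqrt (by linarith), ?_⟩
        nlinarith [Real.sq_sqrt (show (0:ℝ) ≤ 1 + a/2 by linarith),
          Real.sqrt_nonneg (1 + a/2)]
      set u := c * x with hu_def
      have hu : u < x := by nlinarith
      have hu0 : u < 0 := by nlinarith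
      set K := (x - u) * (2 * normPdf u) with hK_def
      have hK : 0 < K := mul_pos (by linarith) (mul_pos two_pos (normPdf_pos u))
      have hx2 : 0 < x^2 := by nlinarith
      have hp : ((1-a)*u^2 - x^2)/2 < 0 := by
        have hu2 : u^2 = (1 + a/2) * x^2 := by rw [hu_def, mul_pow, hc2]
        nlinarith [mul_pos hx2 ha]
      set C := 2 / betaFn a b with hC_def
      have hCpos : 0 < C := div_pos two_pos hB
      set A := C * (K / Real.sqrt (2*Real.pi))^(a-1) * M * normPdf x / 2 with hA_def
      have key : ∀ l : ℝ, 0 ≤ l → bsnPdf l a b x ≤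
          A * Real.exp (((1-a)*u^2 - x^2)/2 * l^2 + (-(1-a)*u) * l + (1-a)/2) := by
        intro l hl
        have hlx : l * x ≤ 0 := mul_nonpos_iff.2 (Or.inl ⟨hl, hx.le⟩)
        have hlb : K * normPdf (l*u - 1) ≤ snCdf l x := by
          calc K * normPdf (l*u - 1) = (x - u) * (2 * normPdf u * normPdf (l*u - 1)) := by
                rw [hK_def]; ring
            _ ≤ snCdf l x := snCdf_lb hu hx hl
        have hKφ : 0 < K * normPdf (l*u - 1) := mul_pos hK (normPdf_pos _)
        have e1 : snCdf l x ^ (a-1) ≤ (K * normPdf (l*u - 1))^(a-1) :=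
          Real.rpow_le_rpow_of_nonpos hKφ hlb (by linarith)
        have e2 := hMb l
        have e3 : normCdf (l*x) ≤ Real.exp (-(l*x)^2/2)/2 := normCdf_chernoff hlx
        have step : bsnPdf l a b x ≤
            C * (K * normPdf (l*u - 1))^(a-1) * M * normPdf x * (Real.exp (-(l*x)^2/2)/2) := by
          unfold bsnPdf
          rw [← hC_def]
          have hs0 := snCdf_nonneg l x
          have h1s : (0:ℝ) ≤ 1 - snCdf l x := by have := hsle l; linarith
          gcongr
          · exact normCdf_nonneg _
          · exact mul_nonneg (mul_nonneg (mul_nonneg hCpos.le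
              (Real.rpow_nonneg hKφ.le _)) hM0) (normPdf_nonneg x)
          · exact normPdf_nonneg x
        refine step.trans (le_of_eq ?_)
        have h1 : K * normPdf (l*u - 1) =
            (K / Real.sqrt (2*Real.pi)) * Real.exp (-(l*u-1)^2/2) := by
          unfold normPdf; ring
        have hz : ((1-a)*u^2 - x^2)/2 * l^2 + (-(1-a)*u) * l + (1-a)/2 =
            (-(l*u-1)^2/2*(a-1)) + (-(l*x)^2/2) := by ring
        rw [h1, Real.mul_rpow (by positivity) (Real.exp_nonneg _), ← Real.exp_mul,
          hA_def, hz, Real.exp_add]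
        ring
      apply squeeze_zero' (Eventually.of_forall hnn) ((eventually_ge_atTop (0:ℝ)).mono key)
      have := (Real.tendsto_exp_atBot.comp (quad_atBot (q := -(1-a)*u) (r := (1-a)/2) hp)).const_mul A
      simpa using this
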